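/- Let f : D ⊆ ℝⁿ → ℝ be real-analytic on the open set D and admit a holomorphic extension F to D × (−δ̄, δ̄)ⁿ ⊆ ℂⁿ, and define f_δ(x) := E_{v ∼ Unif(𝔹ⁿ)}[Re(F(x + iδv))]. Then for every x ∈ D, the gradient of the smoothed function converges to the true gradient as the smoothing vanishes: lim_{δ → 0+} ∇f_δ(x) = ∇f(x). -/

import Mathlib

open MeasureTheory Filter Metric

/-- The embedding `(x, y) ↦ x + i y` of two real vectors into `ℂⁿ`. -/
noncomputable def embc {n : ℕ} (x y : EuclideanSpace ℝ (Fin n)) : EuclideanSpace ℂ (Fin n) :=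
  WithLp.toLp 2 (fun j => ⟨x j, y j⟩)

/-- The set `D × (−δ̄, δ̄)ⁿ = {x + iy : x ∈ D, y ∈ (−δ̄, δ̄)ⁿ} ⊆ ℂⁿ`. -/
def complexStrip {n : ℕ} (D : Set (EuclideanSpace ℝ (Fin n))) (δbar : ℝ) :
    Set (EuclideanSpace ℂ (Fin n)) :=
  {z | (WithLp.toLp 2 (fun j => (z j).re) : EuclideanSpace ℝ (Fin n)) ∈ D ∧ ∀ j, |(z j).im| < δbar}

/-- The complex-step smoothing `f_δ(x) = E_{v ∼ Unif(𝔹ⁿ)}[Re (F (x + iδv))]`. -/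
noncomputable def fdelta {n : ℕ} (F : EuclideanSpace ℂ (Fin n) → ℂ) (δ : ℝ)
    (x : EuclideanSpace ℝ (Fin n)) : ℝ :=
  (volume (Metric.closedBall (0 : EuclideanSpace ℝ (Fin n)) 1)).toReal⁻¹ *
    ∫ v in Metric.closedBall (0 : EuclideanSpace ℝ (Fin n)) 1, (F (embc x (δ • v))).re

noncomputable def embcRe (n : ℕ) :
    EuclideanSpace ℝ (Fin n) →ₗᵢ[ℝ] EuclideanSpace ℂ (Fin n) where
  toFun x := WithLp.toLp 2 (fun j => (x j : ℂ))
  map_add' x y := by ext j; simp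
  map_smul' c x := by ext j; simp [Complex.real_smul]
  norm_map' x := by simp [EuclideanSpace.norm_eq]

noncomputable def embcIm (n : ℕ) :
    EuclideanSpace ℝ (Fin n) →ₗᵢ[ℝ] EuclideanSpace ℂ (Fin n) where
  toFun x := WithLp.toLp 2 (fun j => (x j : ℂ) * Complex.I)
  map_add' x y := by ext j; simp [add_mul]
  map_smul' c x := by ext j; simp [Complex.real_smul, mul_assoc]
  norm_map' x := by simp [EuclideanSpace.norm_eq]

lemma embc_eq {n : ℕ} (x y : EuclideanSpace ℝ (Fin n)) :
    embc x y = (embcRe n).toContinuousLinearMap x + (embcIm n).toContinuousLinearMap y := by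
  ext j
  show Complex.mk (x j) (y j) = (x j : ℂ) + (y j : ℂ) * Complex.I
  exact (Complex.mk_eq_add_mul_I _ _)

lemma embc_mem_strip {n : ℕ} {D : Set (EuclideanSpace ℝ (Fin n))} {δbar : ℝ}
    {a b : EuclideanSpace ℝ (Fin n)} (ha : a ∈ D) (hb : ∀ j, |b j| < δbar) :
    embc a b ∈ complexStrip D δbar := ⟨ha, hb⟩

lemma euclid_abs_coord_le {n : ℕ} (b : EuclideanSpace ℝ (Fin n)) (j : Fin n) :
    |b j| ≤ ‖b‖ := by
  rw [EuclideanSpace.norm_eq, ← Real.sqrt_sq_eq_abs]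
  apply Real.sqrt_le_sqrt
  have := Finset.single_le_sum (f := fun i => ‖b i‖ ^ 2) (fun i _ => sq_nonneg _)
    (Finset.mem_univ j)
  simpa [Real.norm_eq_abs, sq_abs] using this

lemma isOpen_complexStrip {n : ℕ} {D : Set (EuclideanSpace ℝ (Fin n))} (hD : IsOpen D)
    (δbar : ℝ) : IsOpen (complexStrip D δbar) := by
  have hcoord : ∀ j : Fin n, Continuous fun z : EuclideanSpace ℂ (Fin n) => z j :=
    fun j => (continuous_apply j).comp (PiLp.continuous_ofLp (p := 2) (β := fun _ : Fin n => ℂ))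
  have h1 : IsOpen {z : EuclideanSpace ℂ (Fin n) |
      (WithLp.toLp 2 (fun j => (z j).re) : EuclideanSpace ℝ (Fin n)) ∈ D} := by
    apply hD.preimage
    exact (PiLp.continuous_toLp (p := 2) (β := fun _ : Fin n => ℝ)).comp
      (continuous_pi fun j => Complex.continuous_re.comp (hcoord j))
  have h2 : IsOpen {z : EuclideanSpace ℂ (Fin n) | ∀ j, |(z j).im| < δbar} := by
    rw [Set.setOf_forall]
    exact isOpen_iInter_of_finite fun j =>
      isOpen_lt (continuous_abs.comp (Complex.continuous_im.comp (hcoord j))) continuous_const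
  exact h1.inter h2

set_option maxHeartbeats 1000000 in
/-- consistency of the smoothed gradient. If `f` is real-analytic on the
open set `D` and admits a holomorphic extension `F` to `D × (−δ̄, δ̄)ⁿ`, then for every `x ∈ D`,
`∇f_δ(x) → ∇f(x)` as `δ → 0⁺`. -/
theorem fdelta_gradient_tendsto
    (n : ℕ) (D : Set (EuclideanSpace ℝ (Fin n))) (hD : IsOpen D)
    (f : EuclideanSpace ℝ (Fin n) → ℝ) (hf : AnalyticOnNhd ℝ f D)
    (δbar : ℝ) (hδ0 : 0 < δbar)
    (F : EuclideanSpace ℂ (Fin n) → ℂ)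
    (hF : AnalyticOnNhd ℂ F (complexStrip D δbar))
    (hFf : ∀ x ∈ D, F (embc x 0) = (f x : ℂ)) :
    ∀ x ∈ D,
      Tendsto (fun δ : ℝ => gradient (fdelta F δ) x) (nhdsWithin 0 (Set.Ioi 0))
        (nhds (gradient f x)) := by
  classical
  intro x hx
  set L := (embcRe n).toContinuousLinearMap with hLdef
  set J := (embcIm n).toContinuousLinearMap with hJdef
  set B := Metric.closedBall (0 : EuclideanSpace ℝ (Fin n)) 1 with hBdef
  set c : ℝ := (volume B).toReal with hcdef
  have hc : 0 < c :=
    ENNReal.toReal_pos (measure_closedBall_pos volume 0 one_pos).ne'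
      (isCompact_closedBall 0 1).measure_lt_top.ne
  obtain ⟨r, hr0, hrD⟩ : ∃ r > 0, Metric.closedBall x r ⊆ D := by
    obtain ⟨ε, hε, h⟩ := Metric.isOpen_iff.1 hD x hx
    exact ⟨ε / 2, by positivity, (Metric.closedBall_subset_ball (by linarith)).trans h⟩
  have hFc : ContinuousOn F (complexStrip D δbar) := hF.continuousOn
  have hF' : ContinuousOn (fderiv ℂ F) (complexStrip D δbar) := hF.fderiv.continuousOn
  have hopen := isOpen_complexStrip hD δbar
  -- membership of translated points in the strip
  have hmem : ∀ a ∈ D, ∀ w : EuclideanSpace ℝ (Fin n), (∀ j, |w j| < δbar) →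
      L a + J w ∈ complexStrip D δbar := by
    intro a ha w hw
    rw [hLdef, hJdef, ← embc_eq]
    exact embc_mem_strip ha hw
  have hzx : L x ∈ complexStrip D δbar := by
    have := hmem x hx 0 (fun j => by simpa using hδ0)
    simpa using this
  -- the compact set K and the bound M0
  set K : Set (EuclideanSpace ℂ (Fin n)) :=
    (fun p : EuclideanSpace ℝ (Fin n) × EuclideanSpace ℝ (Fin n) => L p.1 + J p.2) ''
      (Metric.closedBall x r ×ˢ Metric.closedBall 0 (δbar / 2)) with hKdef
  have hKc : IsCompact K :=
    ((isCompact_closedBall x r).prod (isCompact_closedBall 0 (δbar / 2))).image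
      ((L.continuous.comp continuous_fst).add (J.continuous.comp continuous_snd))
  have hKs : K ⊆ complexStrip D δbar := by
    rintro _ ⟨⟨a, b⟩, ⟨ha, hb⟩, rfl⟩
    refine hmem a (hrD ha) b fun j => ?_
    have hb' : ‖b‖ ≤ δbar / 2 := mem_closedBall_zero_iff.1 hb
    exact lt_of_le_of_lt ((euclid_abs_coord_le b j).trans hb') (by linarith)
  obtain ⟨M, hM⟩ := hKc.exists_bound_of_continuousOn (hF'.mono hKs)
  set M0 : ℝ := max M 0 with hM0def
  -- the norm bound for the composed derivative
  have hnorm : ∀ z ∈ K,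
      ‖(Complex.reCLM.comp ((fderiv ℂ F z).restrictScalars ℝ)).comp L‖ ≤ M0 := by
    intro z hz
    have h1 : ‖Complex.reCLM.comp ((fderiv ℂ F z).restrictScalars ℝ)‖ ≤ ‖fderiv ℂ F z‖ := by
      refine le_trans (ContinuousLinearMap.opNorm_comp_le _ _) ?_
      rw [Complex.reCLM_norm, one_mul, ContinuousLinearMap.norm_restrictScalars]
    have h2 : ‖L‖ ≤ 1 := LinearIsometry.norm_toContinuousLinearMap_le _
    calc ‖(Complex.reCLM.comp ((fderiv ℂ F z).restrictScalars ℝ)).comp L‖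
        ≤ ‖Complex.reCLM.comp ((fderiv ℂ F z).restrictScalars ℝ)‖ * ‖L‖ :=
          ContinuousLinearMap.opNorm_comp_le _ _
      _ ≤ ‖fderiv ℂ F z‖ * 1 := by
          apply mul_le_mul h1 h2 (norm_nonneg _) (norm_nonneg _)
      _ = ‖fderiv ℂ F z‖ := mul_one _
      _ ≤ M := hM z hz
      _ ≤ M0 := le_max_left _ _
  -- key pointwise differentiability
  have keyd : ∀ x' ∈ D, ∀ w : EuclideanSpace ℝ (Fin n), (∀ j, |w j| < δbar) →
      HasFDerivAt (fun y => (F (L y + J w)).re)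
        ((Complex.reCLM.comp ((fderiv ℂ F (L x' + J w)).restrictScalars ℝ)).comp L) x' := by
    intro x' hx' w hw
    have hz : L x' + J w ∈ complexStrip D δbar := hmem x' hx' w hw
    have hdF : HasFDerivAt F (fderiv ℂ F (L x' + J w)) (L x' + J w) :=
      ((hF _ hz).differentiableAt).hasFDerivAt
    have h1 : HasFDerivAt (fun y => L y + J w) (L : _ →L[ℝ] _) x' :=
      L.hasFDerivAt.add_const _
    have h2 := (hdF.restrictScalars ℝ).comp x' h1
    have h3 := (Complex.reCLM.hasFDerivAt).comp x' h2
    rw [← ContinuousLinearMap.comp_assoc] at h3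
    exact h3
  -- continuity of the post-composition operation
  have hTcont : Continuous fun A : EuclideanSpace ℂ (Fin n) →L[ℝ] ℂ =>
      (Complex.reCLM.comp A).comp L :=
    (continuous_const.clm_comp continuous_id).clm_comp continuous_const
  have hRScont : Continuous fun A : EuclideanSpace ℂ (Fin n) →L[ℂ] ℂ =>
      A.restrictScalars ℝ :=
    (ContinuousLinearMap.restrictScalarsIsometry ℂ (EuclideanSpace ℂ (Fin n)) ℂ ℝ ℝ).continuous
  -- continuity of the full integrand as a function of the strip point
  have hInt : ContinuousOn (fun z : EuclideanSpace ℂ (Fin n) =>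
      (Complex.reCLM.comp ((fderiv ℂ F z).restrictScalars ℝ)).comp L)
      (complexStrip D δbar) :=
    (hTcont.comp hRScont).comp_continuousOn hF'
  -- the map v ↦ L y + J (δ v) sends B into the strip
  have hmapsTo : ∀ δ : ℝ, 0 ≤ δ → δ < δbar → ∀ y ∈ D,
      Set.MapsTo (fun v => L y + J (δ • v)) B (complexStrip D δbar) := by
    intro δ hδ1 hδ2 y hy v hv
    refine hmem y hy _ fun j => ?_
    have h1 : ‖δ • v‖ ≤ δ := by
      rw [norm_smul, Real.norm_eq_abs, abs_of_nonneg hδ1]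
      exact mul_le_of_le_one_right hδ1 (mem_closedBall_zero_iff.1 hv)
    exact lt_of_le_of_lt ((euclid_abs_coord_le _ j).trans h1) hδ2
  have hcontv : ∀ (y : EuclideanSpace ℝ (Fin n)) (δ : ℝ),
      Continuous fun v : EuclideanSpace ℝ (Fin n) => L y + J (δ • v) :=
    fun y δ => continuous_const.add (J.continuous.comp (continuous_id.const_smul δ))
  have hmeasv : ∀ δ : ℝ, 0 ≤ δ → δ < δbar →
      AEStronglyMeasurable (fun v : EuclideanSpace ℝ (Fin n) =>
        (Complex.reCLM.comp ((fderiv ℂ F (L x + J (δ • v))).restrictScalars ℝ)).comp L)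
        (volume.restrict B) := by
    intro δ hδ1 hδ2
    exact (hInt.comp (hcontv x δ).continuousOn (hmapsTo δ hδ1 hδ2 x hx)).aestronglyMeasurable
      measurableSet_closedBall
  set Φ : ℝ → (EuclideanSpace ℝ (Fin n) →L[ℝ] ℝ) := fun δ =>
    ∫ v in B, (Complex.reCLM.comp ((fderiv ℂ F (L x + J (δ • v))).restrictScalars ℝ)).comp L
    with hΦdef
  -- derivative of the smoothed function for each small positive δ
  have hder : ∀ δ ∈ Set.Ioo (0 : ℝ) (δbar / 2), HasFDerivAt (fdelta F δ) (c⁻¹ • Φ δ) x := by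
    intro δ hδ
    have hδb : δ < δbar := by
      have := hδ.2; linarith
    have hsm : ∀ v ∈ B, ‖δ • v‖ ≤ δ := by
      intro v hv
      rw [norm_smul, Real.norm_eq_abs, abs_of_pos hδ.1]
      exact mul_le_of_le_one_right hδ.1.le (mem_closedBall_zero_iff.1 hv)
    have hcoordlt : ∀ v ∈ B, ∀ j, |(δ • v) j| < δbar := fun v hv j =>
      lt_of_le_of_lt ((euclid_abs_coord_le _ j).trans (hsm v hv)) hδb
    have main : HasFDerivAt (fun y => ∫ v in B, (F (L y + J (δ • v))).re)
        (∫ v in B,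
          (Complex.reCLM.comp ((fderiv ℂ F (L x + J (δ • v))).restrictScalars ℝ)).comp L) x := by
      apply hasFDerivAt_integral_of_dominated_of_fderiv_le
        (F' := fun y v =>
          (Complex.reCLM.comp ((fderiv ℂ F (L y + J (δ • v))).restrictScalars ℝ)).comp L)
        (bound := fun _ => M0) (Metric.ball_mem_nhds x hr0)
      · filter_upwards [hD.mem_nhds hx] with y hy
        refine ContinuousOn.aestronglyMeasurable ?_ measurableSet_closedBall
        exact Complex.continuous_re.comp_continuousOn
          (hFc.comp (hcontv y δ).continuousOn (hmapsTo δ hδ.1.le hδb y hy))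
      · refine ContinuousOn.integrableOn_compact (isCompact_closedBall 0 1) ?_
        exact Complex.continuous_re.comp_continuousOn
          (hFc.comp (hcontv x δ).continuousOn (hmapsTo δ hδ.1.le hδb x hx))
      · exact hmeasv δ hδ.1.le hδb
      · refine (ae_restrict_iff' measurableSet_closedBall).2 (Eventually.of_forall ?_)
        intro v hv y hy
        refine hnorm _ ⟨(y, δ • v), ⟨ball_subset_closedBall hy, ?_⟩, rfl⟩
        exact mem_closedBall_zero_iff.2 ((hsm v hv).trans hδ.2.le)
      · exact integrableOn_const (isCompact_closedBall _ _).measure_lt_top.ne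
      · refine (ae_restrict_iff' measurableSet_closedBall).2 (Eventually.of_forall ?_)
        intro v hv y hy
        exact keyd y (hrD (ball_subset_closedBall hy)) (δ • v) (hcoordlt v hv)
    have hfd : fdelta F δ = fun y => c⁻¹ * ∫ v in B, (F (L y + J (δ • v))).re := by
      funext y
      simp only [fdelta, embc_eq, ← hLdef, ← hJdef, ← hBdef, ← hcdef]
    rw [hfd]
    exact main.const_mul c⁻¹
  have hz0 : L x + J (0 : EuclideanSpace ℝ (Fin n)) = L x := by rw [map_zero, add_zero]
  -- identification of the limit derivative with fderiv f
  have hfderiv_f : fderiv ℝ f x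
      = (Complex.reCLM.comp ((fderiv ℂ F (L x)).restrictScalars ℝ)).comp L := by
    have hkey0 := keyd x hx 0 (fun j => by simpa using hδ0)
    rw [hz0] at hkey0
    have heq : f =ᶠ[nhds x] fun y => (F (L y + J (0 : EuclideanSpace ℝ (Fin n)))).re := by
      filter_upwards [hD.mem_nhds hx] with y hy
      rw [hLdef, hJdef, ← embc_eq, hFf y hy, Complex.ofReal_re]
    rw [heq.fderiv_eq, hkey0.fderiv]
  -- limit of the integral of derivatives
  have hlim : Tendsto Φ (nhdsWithin 0 (Set.Ioi 0))
      (nhds (∫ _v in B,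
        (Complex.reCLM.comp ((fderiv ℂ F (L x)).restrictScalars ℝ)).comp L)) := by
    apply tendsto_integral_filter_of_dominated_convergence (bound := fun _ => M0)
    · filter_upwards [Ioo_mem_nhdsGT_of_mem ⟨le_refl (0 : ℝ), half_pos hδ0⟩] with δ hδ
      exact hmeasv δ hδ.1.le (by linarith [hδ.2])
    · filter_upwards [Ioo_mem_nhdsGT_of_mem ⟨le_refl (0 : ℝ), half_pos hδ0⟩] with δ hδ
      refine (ae_restrict_iff' measurableSet_closedBall).2 (Eventually.of_forall ?_)
      intro v hv
      refine hnorm _ ⟨(x, δ • v), ⟨mem_closedBall_self hr0.le, ?_⟩, rfl⟩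
      have hsm : ‖δ • v‖ ≤ δ := by
        rw [norm_smul, Real.norm_eq_abs, abs_of_pos hδ.1]
        exact mul_le_of_le_one_right hδ.1.le (mem_closedBall_zero_iff.1 hv)
      exact mem_closedBall_zero_iff.2 (hsm.trans hδ.2.le)
    · exact integrableOn_const (isCompact_closedBall _ _).measure_lt_top.ne
    · refine Eventually.of_forall fun v => ?_
      have t1 : Tendsto (fun δ : ℝ => L x + J (δ • v)) (nhdsWithin 0 (Set.Ioi 0))
          (nhds (L x)) := by
        have hcont : Continuous fun δ : ℝ => L x + J (δ • v) :=
          continuous_const.add (J.continuous.comp (continuous_id.smul continuous_const))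
        have h0 : Tendsto (fun δ : ℝ => L x + J (δ • v)) (nhds 0)
            (nhds (L x + J ((0 : ℝ) • v))) := hcont.tendsto 0
        rw [zero_smul, map_zero, add_zero] at h0
        exact h0.mono_left nhdsWithin_le_nhds
      have t2 : ContinuousAt (fderiv ℂ F) (L x) := hF'.continuousAt (hopen.mem_nhds hzx)
      have t3 : Tendsto (fun δ : ℝ => fderiv ℂ F (L x + J (δ • v)))
          (nhdsWithin 0 (Set.Ioi 0)) (nhds (fderiv ℂ F (L x))) := t2.tendsto.comp t1
      have t4 : Tendsto (fun A : EuclideanSpace ℂ (Fin n) →L[ℂ] ℂ =>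
            (Complex.reCLM.comp (A.restrictScalars ℝ)).comp L)
          (nhds (fderiv ℂ F (L x)))
          (nhds ((Complex.reCLM.comp ((fderiv ℂ F (L x)).restrictScalars ℝ)).comp L)) :=
        ((hTcont.comp hRScont).tendsto _)
      exact t4.comp t3
  have hlim2 : Tendsto (fun δ => c⁻¹ • Φ δ) (nhdsWithin 0 (Set.Ioi 0))
      (nhds (fderiv ℝ f x)) := by
    have h1 := hlim.const_smul c⁻¹
    rw [setIntegral_const, measureReal_def, ← hcdef, smul_smul, inv_mul_cancel₀ hc.ne', one_smul] at h1
    rw [hfderiv_f]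
    exact h1
  have hT : Tendsto (fun δ : ℝ =>
      (InnerProductSpace.toDual ℝ (EuclideanSpace ℝ (Fin n))).symm (c⁻¹ • Φ δ))
      (nhdsWithin 0 (Set.Ioi 0)) (nhds (gradient f x)) := by
    have hcontD := (InnerProductSpace.toDual ℝ (EuclideanSpace ℝ (Fin n))).symm.continuous
    have := (hcontD.tendsto _).comp hlim2
    simpa only [gradient, Function.comp_def] using this
  refine Tendsto.congr' ?_ hT
  filter_upwards [Ioo_mem_nhdsGT_of_mem ⟨le_refl (0 : ℝ), half_pos hδ0⟩] with δ hδ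
  simp only [gradient]
  rw [(hder δ hδ).fderiv]
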